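/- Let Q be the quiver with one vertex e and one loop a, over a field k of characteristic zero. For all odd integers n, m ≥ 1 one has [(a^n,a),(a^m,a)]_Q = (n−m)·(a^{n+m−1},a). Consequently the k-span of {(a^n,a) : n ≥ 1 odd} is a Lie subalgebra of (C(Q), [·,·]_Q), and the elements l_i := (1/2)(a^{2i+1},a) (i ≥ 0) satisfy the Witt algebra relations [l_i,l_j]_Q = (i−j)·l_{i+j}. -/

import Mathlib

/-! One-loop quiver base: one vertex `e` and one loop `a`.

For each `n ≥ 1` the set of paths of length `n` is `{a^n}`, and
`Q_n ∥ (Q_0 ∪ Q_1) = {(a^n, e), (a^n, a)}`.  The graded vector space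
`C(Q) = ⊕_{n ≥ 1} k(Q_n ∥ Q_0 ∪ Q_1)` therefore has basis indexed by
`{n : ℕ // 1 ≤ n} × Bool`, where `(n, false) ↔ (a^n, e)` and `(n, true) ↔ (a^n, a)`. -/

namespace OneLoop

/-- Degrees `n ≥ 1` indexing the components of `C(Q)`. -/
abbrev Idx : Type := {n : ℕ // 1 ≤ n}

variable (k : Type) [Field k]

/-- `C(Q) = ⊕_{n ≥ 1} k(Q_n ∥ Q_0 ∪ Q_1)` for the one-loop quiver:
basis `(n, false) ↔ (a^n, e)`, `(n, true) ↔ (a^n, a)`. -/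
abbrev CL : Type := (Idx × Bool) →₀ k

/-- The bracket `[·,·]_Q` on basis elements.  For the one-loop quiver every arrow of
every path equals `a`, so `(a^n, x) ∘_i (a^m, y) = δ_{a,y} (a^{n+m-1}, x)`, and the
general formula
`[(α,x),(β,y)]_Q = Σ_{i=1}^{n} (−1)^{(i−1)(m−1)} (α,x)∘_i(β,y)
  − (−1)^{(n−1)(m−1)} Σ_{i=1}^{m} (−1)^{(i−1)(n−1)} (β,y)∘_i(α,x)`
becomes the expression below (`true` encodes the arrow `a`, `false` the vertex `e`). -/
noncomputable def brB : Idx × Bool → Idx × Bool → CL k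
  | ⟨⟨n, hn⟩, x⟩, ⟨⟨m, hm⟩, y⟩ =>
    (∑ i ∈ Finset.range n, ((-1 : k) ^ (i * (m - 1)))) •
        (if y then Finsupp.single (⟨n + m - 1, by omega⟩, x) (1 : k) else 0)
      - ((-1 : k) ^ ((n - 1) * (m - 1))) •
          ((∑ i ∈ Finset.range m, ((-1 : k) ^ (i * (n - 1)))) •
            (if x then Finsupp.single (⟨n + m - 1, by omega⟩, y) (1 : k) else 0))

/-- The bracket `[·,·]_Q` on `C(Q)`: the bilinear extension of `brB`. -/
noncomputable def br (f g : CL k) : CL k :=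
  f.sum fun P cP => g.sum fun R cR => (cP * cR) • brB k P R

/-- The basis element `(a^n, a)` (for `hn : 1 ≤ n`). -/
noncomputable def pa (n : ℕ) (hn : 1 ≤ n) : CL k := Finsupp.single (⟨n, hn⟩, true) (1 : k)

/-- The basis element `(a^n, e)` (for `hn : 1 ≤ n`). -/
noncomputable def pe (n : ℕ) (hn : 1 ≤ n) : CL k := Finsupp.single (⟨n, hn⟩, false) (1 : k)


/-- The set `{(a^n, a) : n ≥ 1 odd}` inside `C(Q)`. -/
def oddSet : Set (CL k) := {w | ∃ (n : ℕ) (hn : 1 ≤ n), Odd n ∧ w = pa k n hn}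

/-- `l_i := (1/2)·(a^{2i+1}, a)`. -/
noncomputable def ell (i : ℕ) : CL k := (2 : k)⁻¹ • pa k (2 * i + 1) (by omega)

/-- STATEMENT 3: for the one-loop quiver over a field `k` of characteristic zero:
for all odd `n, m ≥ 1`, `[(a^n,a),(a^m,a)]_Q = (n−m)·(a^{n+m−1},a)`; consequently the
`k`-span of `{(a^n,a) : n ≥ 1 odd}` is a Lie subalgebra of `(C(Q), [·,·]_Q)` (it is a
subspace closed under the bracket), and the elements `l_i := (1/2)·(a^{2i+1},a)`
satisfy the Witt algebra relations `[l_i, l_j]_Q = (i−j)·l_{i+j}`. -/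
-- auxiliary lemmas

lemma pa_congr {n n' : ℕ} (hn : 1 ≤ n) (hn' : 1 ≤ n') (h : n = n') :
    pa k n hn = pa k n' hn' := by subst h; rfl

lemma br_single (P R : Idx × Bool) (c d : k) :
    br k (Finsupp.single P c) (Finsupp.single R d) = (c * d) • brB k P R := by
  unfold br
  rw [Finsupp.sum_single_index, Finsupp.sum_single_index]
  · simp
  · simp [Finsupp.sum_single_index]

lemma brB_aa (n m : ℕ) (hn : 1 ≤ n) (hm : 1 ≤ m) (hon : Odd n) (hom : Odd m) :
    brB k (⟨⟨n, hn⟩, true⟩) (⟨⟨m, hm⟩, true⟩)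
      = ((n : k) - (m : k)) • Finsupp.single (⟨n + m - 1, (by omega : 0 < n + m - 1)⟩, true) (1 : k) := by
  have hme : Even (m - 1) := Nat.Odd.sub_odd hom odd_one
  have hne : Even (n - 1) := Nat.Odd.sub_odd hon odd_one
  have h1 : ∀ i : ℕ, ((-1 : k)) ^ (i * (m - 1)) = 1 := fun i => (hme.mul_left i).neg_one_pow
  have h2 : ∀ i : ℕ, ((-1 : k)) ^ (i * (n - 1)) = 1 := fun i => (hne.mul_left i).neg_one_pow
  have h3 : ((-1 : k)) ^ ((n - 1) * (m - 1)) = 1 := (hme.mul_left _).neg_one_pow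
  show _ - _ = _
  simp only [h1, h2, h3, if_pos, Finset.sum_const, Finset.card_range, nsmul_eq_mul, mul_one,
    one_smul, if_true]
  rw [sub_smul]

lemma br_pa_pa (n m : ℕ) (hn : 1 ≤ n) (hm : 1 ≤ m) (hon : Odd n) (hom : Odd m) :
    br k (pa k n hn) (pa k m hm)
      = ((n : k) - (m : k)) • pa k (n + m - 1) (by omega : 0 < n + m - 1) := by
  rw [pa, pa, br_single, brB_aa k n m hn hm hon hom, one_mul, one_smul]
  rfl

lemma br_zero_right (f : CL k) : br k f 0 = 0 := by
  unfold br; simp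

lemma br_zero_left (g : CL k) : br k 0 g = 0 := by
  unfold br; simp

lemma br_add_left (f f' g : CL k) : br k (f + f') g = br k f g + br k f' g := by
  unfold br
  rw [Finsupp.sum_add_index]
  · intro P _; simp
  · intro P _ b1 b2
    simp only [add_mul, add_smul]
    exact Finsupp.sum_add

lemma br_add_right (f g g' : CL k) : br k f (g + g') = br k f g + br k f g' := by
  unfold br
  rw [← Finsupp.sum_add]
  apply Finsupp.sum_congr
  intro P _
  rw [Finsupp.sum_add_index]
  · intro R _; simp
  · intro R _ b1 b2
    simp only [mul_add, add_smul]

lemma br_smul_left (c : k) (f g : CL k) : br k (c • f) g = c • br k f g := by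
  unfold br
  rw [Finsupp.sum_smul_index, Finsupp.smul_sum]
  · apply Finsupp.sum_congr
    intro P _
    rw [Finsupp.smul_sum]
    apply Finsupp.sum_congr
    intro R _
    rw [smul_smul, mul_assoc]
  · intro P; simp

lemma br_smul_right (c : k) (f g : CL k) : br k f (c • g) = c • br k f g := by
  unfold br
  rw [Finsupp.smul_sum]
  apply Finsupp.sum_congr
  intro P _
  rw [Finsupp.sum_smul_index, Finsupp.smul_sum]
  · apply Finsupp.sum_congr
    intro R _
    rw [smul_smul, mul_left_comm]
  · intro R; simp

theorem stmt3 (k : Type) [Field k] [CharZero k] :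
    (∀ (n m : ℕ) (hn : 1 ≤ n) (hm : 1 ≤ m), Odd n → Odd m →
      br k (pa k n hn) (pa k m hm)
        = ((n : k) - (m : k)) • pa k (n + m - 1) (by omega)) ∧
    (∀ f g : CL k, f ∈ Submodule.span k (oddSet k) → g ∈ Submodule.span k (oddSet k) →
      br k f g ∈ Submodule.span k (oddSet k)) ∧
    (∀ i j : ℕ, br k (ell k i) (ell k j) = ((i : k) - (j : k)) • ell k (i + j)) := by
  refine ⟨fun n m hn hm hon hom => br_pa_pa k n m hn hm hon hom, ?_, ?_⟩
  · intro f g hf hg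
    induction hf, hg using Submodule.span_induction₂ with
    | mem_mem x y hx hy =>
      obtain ⟨n, hn, hon, rfl⟩ := hx
      obtain ⟨m, hm, hom, rfl⟩ := hy
      rw [br_pa_pa k n m hn hm hon hom]
      apply Submodule.smul_mem
      apply Submodule.subset_span
      exact ⟨n + m - 1, by omega, by
        obtain ⟨p, hp⟩ := hon; obtain ⟨q, hq⟩ := hom
        exact ⟨p + q, by omega⟩, rfl⟩
    | zero_left y hy => rw [br_zero_left]; exact Submodule.zero_mem _
    | zero_right x hx => rw [br_zero_right]; exact Submodule.zero_mem _
    | add_left x y z hx hy hz h1 h2 =>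
      rw [br_add_left]; exact Submodule.add_mem _ h1 h2
    | add_right x y z hx hy hz h1 h2 =>
      rw [br_add_right]; exact Submodule.add_mem _ h1 h2
    | smul_left r x y hx hy h => rw [br_smul_left]; exact Submodule.smul_mem _ _ h
    | smul_right r x y hx hy h => rw [br_smul_right]; exact Submodule.smul_mem _ _ h
  · intro i j
    unfold ell
    rw [br_smul_left, br_smul_right,
      br_pa_pa k _ _ (by omega) (by omega) ⟨i, by ring⟩ ⟨j, by ring⟩]
    rw [pa_congr k _ (by omega : 1 ≤ 2 * (i + j) + 1) (by omega)]
    rw [smul_smul, smul_smul]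
    have h2 : (2 : k) ≠ 0 := two_ne_zero
    have hs : (2 : k)⁻¹ * (2 : k)⁻¹ * (((2 * i + 1 : ℕ) : k) - ((2 * j + 1 : ℕ) : k))
        = ((i : k) - (j : k)) * (2 : k)⁻¹ := by
      push_cast
      field_simp
      ring
    rw [hs, smul_smul]

end OneLoop
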